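/- Let N ≤ H ≤ G be groups with N normal in H, and suppose the triple (G,H,N) has the Cohen–Lyndon property: there is a set T of left coset representatives of H⟪N⟫ in G (where ⟪N⟫ is the normal closure of N in G) such that ⟪N⟫ is the free product of the subgroups tNt⁻¹ for t ∈ T. Then there is a surjective group homomorphism from ⟪N⟫/[G,⟪N⟫] onto N/[H,N]. -/

import Mathlib

set_option linter.unusedSectionVars false
set_option maxHeartbeats 1000000
namespace CohenLyndonAux
open Subgroup Pointwise commutatorElement

variable {G : Type*} [Group G] (H : Subgroup G) (N : Subgroup ↥H) [N.Normal]

abbrev MM : Subgroup G := Subgroup.map H.subtype N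
abbrev CC : Subgroup G := Subgroup.normalClosure ((MM H N : Subgroup G) : Set G)
abbrev QQ := ↥N ⧸ ((⁅(⊤ : Subgroup ↥H), N⁆).subgroupOf N)

noncomputable def toN (t : G) :
    ↥(Subgroup.map (MulAut.conj t).toMonoidHom (MM H N)) →* ↥N :=
  ((N.equivMapOfInjective H.subtype H.subtype_injective).symm.toMonoidHom).comp
    (((MulAut.conj t : G ≃* G).subgroupMap (MM H N)).symm.toMonoidHom)

lemma toN_apply (t : G) (n : ↥N)
    (h : t * (↑↑n : G) * t⁻¹ ∈ Subgroup.map (MulAut.conj t).toMonoidHom (MM H N)) :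
    toN H N t ⟨t * ↑↑n * t⁻¹, h⟩ = n := by
  unfold toN
  show (N.equivMapOfInjective H.subtype H.subtype_injective).symm
    (((MulAut.conj t : G ≃* G).subgroupMap (MM H N)).symm ⟨t * ↑↑n * t⁻¹, h⟩) = n
  rw [MulEquiv.symm_apply_eq, MulEquiv.symm_apply_eq]
  ext
  simp [MulEquiv.coe_subgroupMap_apply, Subgroup.coe_equivMapOfInjective_apply,
    MulAut.conj_apply]

lemma mul_comm_QQ (a b : QQ H N) : a * b = b * a := by
  induction a using QuotientGroup.induction_on
  induction b using QuotientGroup.induction_on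
  rename_i x y
  rw [← QuotientGroup.mk_mul, ← QuotientGroup.mk_mul, QuotientGroup.eq]
  have : (x * y)⁻¹ * (y * x) = ⁅y⁻¹, x⁻¹⁆ := by group
  rw [this, mem_subgroupOf]
  exact commutator_mem_commutator (mem_top _) (inv_mem x.2)

lemma mem_CC (t : G) (x : G)
    (hx : x ∈ Subgroup.map (MulAut.conj t).toMonoidHom (MM H N)) : x ∈ CC H N := by
  obtain ⟨y, hy, rfl⟩ := hx
  exact Subgroup.normalClosure_normal.conj_mem y (Subgroup.subset_normalClosure hy) t

variable (T : Set G)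

noncomputable abbrev LL : Monoid.CoprodI
    (fun t : ↥T => ↥(Subgroup.map (MulAut.conj (t : G)).toMonoidHom (MM H N))) →* G :=
  Monoid.CoprodI.lift (fun t : ↥T =>
    (Subgroup.map (MulAut.conj (t : G)).toMonoidHom (MM H N)).subtype)

variable (hinj : Function.Injective (LL H N T)) (hrange : (LL H N T).range = CC H N)

noncomputable def ee : Monoid.CoprodI
    (fun t : ↥T => ↥(Subgroup.map (MulAut.conj (t : G)).toMonoidHom (MM H N))) ≃* ↥(CC H N) :=
  MulEquiv.ofBijective ((LL H N T).codRestrict (CC H N) (fun x => hrange ▸ ⟨x, rfl⟩))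
    ⟨fun a b hab => hinj (congrArg Subtype.val hab),
     fun c => by
      obtain ⟨x, hx⟩ : (c : G) ∈ (LL H N T).range := hrange.symm ▸ c.2
      exact ⟨x, Subtype.ext hx⟩⟩

lemma ee_coe (x) : ((ee H N T hinj hrange x : ↥(CC H N)) : G) = LL H N T x := rfl

noncomputable def psi : ↥(CC H N) →* QQ H N :=
  (Monoid.CoprodI.lift (fun t : ↥T =>
    (QuotientGroup.mk' ((⁅(⊤ : Subgroup ↥H), N⁆).subgroupOf N)).comp (toN H N (t : G)))).comp
    (ee H N T hinj hrange).symm.toMonoidHom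

lemma psi_apply_gen (t : ↥T)
    (m : ↥(Subgroup.map (MulAut.conj (t : G)).toMonoidHom (MM H N))) (h : (m : G) ∈ CC H N) :
    psi H N T hinj hrange ⟨(m : G), h⟩
      = QuotientGroup.mk' _ (toN H N (t : G) m) := by
  have key : (⟨(m : G), h⟩ : ↥(CC H N)) = ee H N T hinj hrange (Monoid.CoprodI.of m) := by
    apply Subtype.ext
    rw [ee_coe]
    simp [LL, -MulEquiv.toMonoidHom_eq_coe]
  rw [key]
  unfold psi
  simp only [MonoidHom.comp_apply, MulEquiv.coe_toMonoidHom, MulEquiv.symm_apply_apply]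
  rw [Monoid.CoprodI.lift_of]; rfl

/-- generator case of conjugation invariance -/
lemma psi_conj_gen
    (htrans : ∀ g : G, ∃! t : ↥T, (t : G)⁻¹ * g ∈ H ⊔ CC H N)
    (g : G) (t : ↥T)
    (m : ↥(Subgroup.map (MulAut.conj (t : G)).toMonoidHom (MM H N)))
    (h1 : g * (m : G) * g⁻¹ ∈ CC H N) (h2 : (m : G) ∈ CC H N) :
    psi H N T hinj hrange ⟨g * (m : G) * g⁻¹, h1⟩ = psi H N T hinj hrange ⟨(m : G), h2⟩ := by
  -- extract n with m = t n t⁻¹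
  obtain ⟨x, hxM, hconj⟩ := m.2
  obtain ⟨nh, hnN, hnx⟩ := hxM
  set nn : ↥N := ⟨nh, hnN⟩ with hnn
  have hmval : (m : G) = ↑t * (↑↑nn : G) * (↑t : G)⁻¹ := by
    rw [← hconj, ← hnx]; simp [MulAut.conj_apply]; rfl
  -- decompose g∙t
  obtain ⟨t', ht', -⟩ := htrans (g * ↑t)
  have hmem : (↑t' : G)⁻¹ * (g * ↑t) ∈ ((H : Set G) * (CC H N : Set G)) := by
    rw [← Subgroup.mul_normal]; exact ht'
  obtain ⟨h, hhH, w, hwC, hmul⟩ := hmem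
  have hg : g = ↑t' * (h * w) * (↑t : G)⁻¹ := by
    have hmul' : h * w = (↑t' : G)⁻¹ * (g * ↑t) := hmul
    rw [hmul']; group
  have hhH' : h ∈ H := hhH
  set hh : ↥H := ⟨h, hhH'⟩ with hhh
  have hn2mem : hh * (nn : ↥H) * hh⁻¹ ∈ N := Subgroup.Normal.conj_mem ‹N.Normal› _ nn.2 hh
  set n₂ : ↥N := ⟨hh * (nn : ↥H) * hh⁻¹, hn2mem⟩ with hn₂
  set p : G := ↑t' * h with hp
  have hzC : p * w * p⁻¹ ∈ CC H N :=
    Subgroup.normalClosure_normal.conj_mem w hwC p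
  have hMM : ((n₂ : ↥H) : G) ∈ MM H N := ⟨(n₂ : ↥H), n₂.2, rfl⟩
  have huMap : (↑t' : G) * ((n₂ : ↥H) : G) * (↑t' : G)⁻¹
      ∈ Subgroup.map (MulAut.conj (↑t' : G)).toMonoidHom (MM H N) :=
    ⟨((n₂ : ↥H) : G), hMM, by simp [MulAut.conj_apply]⟩
  have huC : (↑t' : G) * ((n₂ : ↥H) : G) * (↑t' : G)⁻¹ ∈ CC H N :=
    mem_CC H N (↑t' : G) _ huMap
  have hn2coe : ((n₂ : ↥H) : G) = h * ((nn : ↥H) : G) * h⁻¹ := rfl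
  have key : (⟨g * (m : G) * g⁻¹, h1⟩ : ↥(CC H N))
      = ⟨p * w * p⁻¹, hzC⟩ * ⟨(↑t' : G) * ((n₂ : ↥H) : G) * (↑t' : G)⁻¹, huC⟩
        * (⟨p * w * p⁻¹, hzC⟩)⁻¹ := by
    apply Subtype.ext
    show g * (m : G) * g⁻¹ = p * w * p⁻¹ * ((↑t' : G) * ((n₂ : ↥H) : G) * (↑t' : G)⁻¹)
      * (p * w * p⁻¹)⁻¹
    rw [hg, hmval, hn2coe, hp]
    group
  rw [key, map_mul, map_mul, map_inv,
    mul_comm_QQ H N (psi H N T hinj hrange ⟨p * w * p⁻¹, hzC⟩) _, mul_inv_cancel_right]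
  have e1 : psi H N T hinj hrange ⟨(↑t' : G) * ((n₂ : ↥H) : G) * (↑t' : G)⁻¹, huC⟩
      = QuotientGroup.mk' _ (toN H N (↑t' : G) ⟨_, huMap⟩) :=
    psi_apply_gen H N T hinj hrange t' ⟨_, huMap⟩ huC
  have e2 : psi H N T hinj hrange ⟨(m : G), h2⟩
      = QuotientGroup.mk' _ (toN H N (↑t : G) m) :=
    psi_apply_gen H N T hinj hrange t m h2
  rw [e1, e2]
  have hm' : m = ⟨(↑t : G) * ((nn : ↥H) : G) * (↑t : G)⁻¹, hmval ▸ m.2⟩ := Subtype.ext hmval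
  rw [hm', toN_apply, toN_apply]
  rw [QuotientGroup.mk'_apply, QuotientGroup.mk'_apply, QuotientGroup.eq]
  rw [mem_subgroupOf]
  have hval : ((n₂⁻¹ * nn : ↥N) : ↥H) = ⁅hh, ((nn : ↥H))⁻¹⁆ := by
    have h1' : ((n₂ : ↥N) : ↥H) = hh * (nn : ↥H) * hh⁻¹ := rfl
    simp only [Subgroup.coe_mul, Subgroup.coe_inv, h1', commutatorElement_def]
    group
  rw [hval]
  exact commutator_mem_commutator (mem_top hh) (inv_mem nn.2)

lemma psi_conj
    (htrans : ∀ g : G, ∃! t : ↥T, (t : G)⁻¹ * g ∈ H ⊔ CC H N)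
    (g : G) (y : ↥(CC H N)) (h1 : g * (y : G) * g⁻¹ ∈ CC H N) :
    psi H N T hinj hrange ⟨g * (y : G) * g⁻¹, h1⟩ = psi H N T hinj hrange y := by
  obtain ⟨x, rfl⟩ := (ee H N T hinj hrange).surjective y
  revert h1
  induction x using Monoid.CoprodI.induction_on with
  | one =>
    intro h1
    have : (⟨g * ((ee H N T hinj hrange 1 : ↥(CC H N)) : G) * g⁻¹, h1⟩ : ↥(CC H N)) = 1 := by
      apply Subtype.ext
      show g * ((ee H N T hinj hrange 1 : ↥(CC H N)) : G) * g⁻¹ = 1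
      rw [map_one]
      show g * ((1 : ↥(CC H N)) : G) * g⁻¹ = 1
      simp
    rw [this, map_one, map_one, map_one]
  | of i m =>
    intro h1
    have hc : ((ee H N T hinj hrange (Monoid.CoprodI.of m) : ↥(CC H N)) : G) = (m : G) := by
      rw [ee_coe]; simp [LL, -MulEquiv.toMonoidHom_eq_coe]
    have h2 : (m : G) ∈ CC H N := hc ▸ (ee H N T hinj hrange (Monoid.CoprodI.of m)).2
    have h3 : g * (m : G) * g⁻¹ ∈ CC H N := Subgroup.normalClosure_normal.conj_mem _ h2 g
    have hval : g * ((ee H N T hinj hrange (Monoid.CoprodI.of m) : ↥(CC H N)) : G) * g⁻¹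
        = g * (m : G) * g⁻¹ := by rw [hc]
    calc psi H N T hinj hrange ⟨g * ((ee H N T hinj hrange (Monoid.CoprodI.of m)
            : ↥(CC H N)) : G) * g⁻¹, h1⟩
        = psi H N T hinj hrange ⟨g * (m : G) * g⁻¹, h3⟩ := congrArg _ (Subtype.ext hval)
      _ = psi H N T hinj hrange ⟨(m : G), h2⟩ :=
          psi_conj_gen H N T hinj hrange htrans g i m h3 h2
      _ = psi H N T hinj hrange (ee H N T hinj hrange (Monoid.CoprodI.of m)) :=
          congrArg _ (Subtype.ext hc.symm)
  | mul a b iha ihb =>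
    intro h1
    have hmem : ∀ (c : ↥(CC H N)), g * (c : G) * g⁻¹ ∈ CC H N := fun c =>
      Subgroup.normalClosure_normal.conj_mem _ c.2 g
    have key : (⟨g * ((ee H N T hinj hrange (a * b) : ↥(CC H N)) : G) * g⁻¹, h1⟩ : ↥(CC H N))
        = ⟨g * ((ee H N T hinj hrange a : ↥(CC H N)) : G) * g⁻¹, hmem _⟩
          * ⟨g * ((ee H N T hinj hrange b : ↥(CC H N)) : G) * g⁻¹, hmem _⟩ := by
      apply Subtype.ext
      show g * ((ee H N T hinj hrange (a * b) : ↥(CC H N)) : G) * g⁻¹ = _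
      rw [map_mul]
      push_cast
      group
    rw [key, map_mul, iha (hmem _), ihb (hmem _), ← map_mul, ← map_mul]

end CohenLyndonAux

open CohenLyndonAux Subgroup commutatorElement

/-- Cohen–Lyndon property: suppose `N ⊴ H ≤ G`, and there is a set `T` of left coset
representatives of `H⟪N⟫` in `G` such that the normal closure `⟪N⟫` of `N` in `G` is the
internal free product of the conjugates `tNt⁻¹`, `t ∈ T`. Then there is a surjective
homomorphism `⟪N⟫/[G,⟪N⟫] → N/[H,N]`. -/
theorem surjective_of_cohenLyndon {G : Type*} [Group G] (H : Subgroup G)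
    (N : Subgroup ↥H) [N.Normal]
    (T : Set G)
    (htrans : ∀ g : G, ∃! t : ↥T,
      (t : G)⁻¹ * g ∈ H ⊔ Subgroup.normalClosure ((Subgroup.map H.subtype N : Subgroup G) : Set G))
    (hinj : Function.Injective
      (Monoid.CoprodI.lift (fun t : ↥T =>
        (Subgroup.map (MulAut.conj (t : G)).toMonoidHom
          (Subgroup.map H.subtype N)).subtype)))
    (hrange : (Monoid.CoprodI.lift (fun t : ↥T =>
        (Subgroup.map (MulAut.conj (t : G)).toMonoidHom
          (Subgroup.map H.subtype N)).subtype)).range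
      = Subgroup.normalClosure ((Subgroup.map H.subtype N : Subgroup G) : Set G)) :
    ∃ φ : (↥(Subgroup.normalClosure ((Subgroup.map H.subtype N : Subgroup G) : Set G)) ⧸
        ((⁅(⊤ : Subgroup G),
            Subgroup.normalClosure ((Subgroup.map H.subtype N : Subgroup G) : Set G)⁆).subgroupOf
          (Subgroup.normalClosure ((Subgroup.map H.subtype N : Subgroup G) : Set G)))) →*
      (↥N ⧸ ((⁅(⊤ : Subgroup ↥H), N⁆).subgroupOf N)),
      Function.Surjective φ := by
  have hinj' : Function.Injective (LL H N T) := hinj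
  have hrange' : (LL H N T).range = CC H N := hrange
  have htrans' : ∀ g : G, ∃! t : ↥T, (t : G)⁻¹ * g ∈ H ⊔ CC H N := htrans
  set ψ := psi H N T hinj' hrange' with hψ
  have hker : ∀ (x : ↥(CC H N)),
      x ∈ (⁅(⊤ : Subgroup G), CC H N⁆).subgroupOf (CC H N) → ψ x = 1 := by
    have hle : ⁅(⊤ : Subgroup G), CC H N⁆ ≤ Subgroup.map (CC H N).subtype ψ.ker := by
      rw [Subgroup.commutator_le]
      intro g _ c hc
      have hmem : g * c * g⁻¹ ∈ CC H N := Subgroup.normalClosure_normal.conj_mem _ hc g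
      refine ⟨⟨g * c * g⁻¹, hmem⟩ * (⟨c, hc⟩)⁻¹, ?_, ?_⟩
      · show ψ _ = 1
        rw [map_mul, map_inv]
        rw [psi_conj H N T hinj' hrange' htrans' g ⟨c, hc⟩ hmem]
        exact mul_inv_cancel _
      · show (g * c * g⁻¹) * c⁻¹ = ⁅g, c⁆
        rw [commutatorElement_def]
    intro x hx
    rw [Subgroup.mem_subgroupOf] at hx
    obtain ⟨y, hy, hyx⟩ := hle hx
    have : y = x := Subtype.ext hyx
    rw [← this]
    exact hy
  refine ⟨QuotientGroup.lift _ ψ (fun x hx => MonoidHom.mem_ker.mpr (hker x hx)), ?_⟩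
  intro q
  induction q using QuotientGroup.induction_on with
  | H n =>
    obtain ⟨t0, -, -⟩ := htrans' 1
    have hMM : ((n : ↥H) : G) ∈ MM H N := ⟨(n : ↥H), n.2, rfl⟩
    have huMap : (↑t0 : G) * ((n : ↥H) : G) * (↑t0 : G)⁻¹
        ∈ Subgroup.map (MulAut.conj (↑t0 : G)).toMonoidHom (MM H N) :=
      ⟨((n : ↥H) : G), hMM, by simp [MulAut.conj_apply]⟩
    have huC : (↑t0 : G) * ((n : ↥H) : G) * (↑t0 : G)⁻¹ ∈ CC H N := mem_CC H N _ _ huMap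
    refine ⟨QuotientGroup.mk ⟨_, huC⟩, ?_⟩
    rw [QuotientGroup.lift_mk]
    have := psi_apply_gen H N T hinj' hrange' t0 ⟨_, huMap⟩ huC
    rw [this, toN_apply]
    rfl
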